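/- For n ≥ 5, every element of the alternating group A_n is a product of three even permutations each of order dividing 2. -/

import Mathlib

open Equiv Equiv.Perm Finset

namespace Stmt1Aux

variable {n : ℕ}

def tfun (n k : ℕ) (x : Fin n) : Fin n :=
  if h : x.val < k ∧ k ≤ n then ⟨k - 1 - x.val, by omega⟩ else x

def sfun (n k : ℕ) (x : Fin n) : Fin n :=
  if h : 0 < x.val ∧ x.val < k ∧ k ≤ n then ⟨k - x.val, by omega⟩ else x

theorem tfun_pos {k : ℕ} {x : Fin n} (h : x.val < k) (hkn : k ≤ n) :
    tfun n k x = ⟨k - 1 - x.val, by omega⟩ := dif_pos ⟨h, hkn⟩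

theorem tfun_neg {k : ℕ} {x : Fin n} (h : ¬(x.val < k ∧ k ≤ n)) : tfun n k x = x := dif_neg h

theorem sfun_pos {k : ℕ} {x : Fin n} (h : 0 < x.val) (h2 : x.val < k) (hkn : k ≤ n) :
    sfun n k x = ⟨k - x.val, by omega⟩ := dif_pos ⟨h, h2, hkn⟩

theorem sfun_neg {k : ℕ} {x : Fin n} (h : ¬(0 < x.val ∧ x.val < k ∧ k ≤ n)) : sfun n k x = x :=
  dif_neg h

theorem tfun_inv (n k : ℕ) : Function.Involutive (tfun n k) := by
  intro x
  by_cases h : x.val < k ∧ k ≤ n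
  · rw [tfun_pos h.1 h.2, tfun_pos (x := ⟨k - 1 - x.val, by omega⟩) (by simp; omega) h.2]
    exact Fin.ext (by simp; omega)
  · rw [tfun_neg h, tfun_neg h]

theorem sfun_inv (n k : ℕ) : Function.Involutive (sfun n k) := by
  intro x
  by_cases h : 0 < x.val ∧ x.val < k ∧ k ≤ n
  · rw [sfun_pos h.1 h.2.1 h.2.2,
      sfun_pos (x := ⟨k - x.val, by omega⟩) (by simp; omega) (by simp; omega) h.2.2]
    exact Fin.ext (by simp; omega)
  · rw [sfun_neg h, sfun_neg h]

def tperm (n k : ℕ) : Equiv.Perm (Fin n) := (tfun_inv n k).toPerm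
def sperm (n k : ℕ) : Equiv.Perm (Fin n) := (sfun_inv n k).toPerm

theorem tperm_sq (n k : ℕ) : tperm n k * tperm n k = 1 :=
  Equiv.ext fun x => tfun_inv n k x

theorem sperm_sq (n k : ℕ) : sperm n k * sperm n k = 1 :=
  Equiv.ext fun x => sfun_inv n k x

theorem tperm_apply (k : ℕ) (x : Fin n) : tperm n k x = tfun n k x := rfl
theorem sperm_apply (k : ℕ) (x : Fin n) : sperm n k x = sfun n k x := rfl

theorem st_apply {k : ℕ} (hk : 2 ≤ k) (hkn : k ≤ n) (x : Fin n) :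
    (sperm n k * tperm n k) x =
      if h : x.val < k then ⟨(x.val + 1) % k, lt_of_lt_of_le (Nat.mod_lt _ (by omega)) hkn⟩
      else x := by
  rcases Nat.lt_or_ge x.val k with hx | hx
  · rw [dif_pos hx, Perm.mul_apply, tperm_apply, tfun_pos hx hkn, sperm_apply]
    rcases Nat.lt_or_ge x.val (k-1) with hx1 | hx1
    · rw [sfun_pos (by simp; omega) (by simp; omega) hkn]
      refine Fin.ext ?_
      show k - (k - 1 - x.val) = (x.val + 1) % k
      rw [Nat.mod_eq_of_lt (by omega)]
      omega
    · rw [sfun_neg (by simp; omega)]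
      refine Fin.ext ?_
      show k - 1 - x.val = (x.val + 1) % k
      have h1 : x.val + 1 = k := by omega
      rw [h1, Nat.mod_self]
      omega
  · rw [dif_neg (by omega), Perm.mul_apply, tperm_apply, tfun_neg (by omega),
      sperm_apply, sfun_neg (by omega)]

section K
variable {k : ℕ} (hk : 2 ≤ k) (hkn : k ≤ n)
include hk hkn

theorem st_pow (m : ℕ) :
    ((sperm n k * tperm n k) ^ m) ⟨0, by omega⟩ =
      ⟨m % k, lt_of_lt_of_le (Nat.mod_lt _ (by omega)) hkn⟩ := by
  induction m with
  | zero => rw [pow_zero]; exact Fin.ext (by simp)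
  | succ m ih =>
      rw [pow_succ', Perm.mul_apply, ih, st_apply hk hkn,
        dif_pos (Nat.mod_lt _ (by omega : 0 < k))]
      refine Fin.ext ?_
      show (m % k + 1) % k = (m + 1) % k
      conv_rhs => rw [Nat.add_mod]
      rw [Nat.mod_eq_of_lt (show 1 < k by omega)]

theorem st_support :
    (sperm n k * tperm n k).support = Finset.univ.filter (fun x => x.val < k) := by
  ext x
  rw [Equiv.Perm.mem_support, Finset.mem_filter, st_apply hk hkn]
  constructor
  · intro h
    rcases Nat.lt_or_ge x.val k with hx | hx
    · exact ⟨Finset.mem_univ _, hx⟩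
    · exact absurd (dif_neg (by omega)) h
  · rintro ⟨-, hx⟩
    rw [dif_pos hx]
    intro hcon
    have := congrArg Fin.val hcon
    simp only [] at this
    rcases Nat.lt_or_ge x.val (k - 1) with h1 | h1
    · rw [Nat.mod_eq_of_lt (by omega)] at this; omega
    · have h2 : x.val + 1 = k := by omega
      rw [h2, Nat.mod_self] at this; omega

theorem st_support_card :
    (sperm n k * tperm n k).support.card = k := by
  rw [st_support hk hkn]
  refine Finset.card_bij' (fun x _ => x.val)
    (fun i hi => ⟨i, lt_of_lt_of_le (Finset.mem_range.mp hi) hkn⟩) ?_ ?_ ?_ ?_ |>.trans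
    (Finset.card_range k)
  · intro a ha
    exact Finset.mem_range.mpr (Finset.mem_filter.mp ha).2
  · intro a ha
    exact Finset.mem_filter.mpr ⟨Finset.mem_univ _, Finset.mem_range.mp ha⟩
  · intro a ha; rfl
  · intro a ha; rfl

theorem st_isCycle : (sperm n k * tperm n k).IsCycle := by
  refine ⟨⟨0, by omega⟩, ?_, ?_⟩
  · rw [st_apply hk hkn, dif_pos (by omega : (0:ℕ) < k)]
    intro hcon
    have := congrArg Fin.val hcon
    simp only [Nat.mod_eq_of_lt (show 1 < k by omega)] at this
    omega
  · intro y hy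
    have hyk : y.val < k := by
      by_contra hge
      exact hy (by rw [st_apply hk hkn, dif_neg hge])
    refine ⟨(y.val : ℤ), ?_⟩
    rw [zpow_natCast, st_pow hk hkn]
    exact Fin.ext (Nat.mod_eq_of_lt hyk)


theorem sperm_support_subset :
    (sperm n k).support ⊆ (sperm n k * tperm n k).support := by
  intro x hx
  rw [st_support hk hkn, Finset.mem_filter]
  refine ⟨Finset.mem_univ _, ?_⟩
  by_contra hge
  exact (Equiv.Perm.mem_support.mp hx) (sfun_neg (by omega))

theorem tperm_support_subset :
    (tperm n k).support ⊆ (sperm n k * tperm n k).support := by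
  intro x hx
  rw [st_support hk hkn, Finset.mem_filter]
  refine ⟨Finset.mem_univ _, ?_⟩
  by_contra hge
  exact (Equiv.Perm.mem_support.mp hx) (tfun_neg (by omega))

end K

/-- Every permutation is the product of two involutions supported inside its support. -/
theorem exists_two_involutions (h : Equiv.Perm (Fin n)) :
    ∃ s t : Equiv.Perm (Fin n), s * s = 1 ∧ t * t = 1 ∧ h = s * t ∧
      s.support ⊆ h.support ∧ t.support ⊆ h.support := by
  induction h using Equiv.Perm.cycle_induction_on with
  | base_one => exact ⟨1, 1, by simp, by simp, by simp, by simp, by simp⟩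
  | base_cycles σ hσ =>
      set k := σ.support.card with hkdef
      have hk : 2 ≤ k := hσ.two_le_card_support
      have hkn : k ≤ n := by
        have := Finset.card_le_card (Finset.subset_univ σ.support)
        simpa using this
      have hconj : IsConj (sperm n k * tperm n k) σ :=
        Equiv.Perm.IsCycle.isConj (st_isCycle hk hkn) hσ (by rw [st_support_card hk hkn])
      obtain ⟨u, hu⟩ := isConj_iff.mp hconj
      have hsupp : σ.support = (sperm n k * tperm n k).support.map u.toEmbedding := by
        rw [← hu, Equiv.Perm.support_conj]
      have key : ∀ v : Equiv.Perm (Fin n), v * v = 1 → (u * v * u⁻¹) * (u * v * u⁻¹) = 1 := by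
        intro v hv
        calc (u * v * u⁻¹) * (u * v * u⁻¹) = u * (v * v) * u⁻¹ := by group
          _ = 1 := by rw [hv, mul_one, mul_inv_cancel]
      refine ⟨u * sperm n k * u⁻¹, u * tperm n k * u⁻¹, key _ (sperm_sq n k),
        key _ (tperm_sq n k), ?_, ?_, ?_⟩
      · rw [← hu]; group
      · rw [Equiv.Perm.support_conj, hsupp]
        exact Finset.map_subset_map.mpr (sperm_support_subset hk hkn)
      · rw [Equiv.Perm.support_conj, hsupp]
        exact Finset.map_subset_map.mpr (tperm_support_subset hk hkn)
  | induction_disjoint σ τ hd hc ihσ ihτ =>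
      obtain ⟨s1, t1, hs1, ht1, he1, hss1, hts1⟩ := ihσ
      obtain ⟨s2, t2, hs2, ht2, he2, hss2, hts2⟩ := ihτ
      have hsupp : (σ * τ).support = σ.support ∪ τ.support := hd.support_mul
      have hds : Disjoint σ.support τ.support :=
        Equiv.Perm.disjoint_iff_disjoint_support.mp hd
      have hdisj : ∀ {a b : Equiv.Perm (Fin n)}, a.support ⊆ σ.support →
          b.support ⊆ τ.support → a.Disjoint b := fun ha hb =>
        Equiv.Perm.disjoint_iff_disjoint_support.mpr
          (Finset.disjoint_of_subset_left ha (Finset.disjoint_of_subset_right hb hds))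
      refine ⟨s1 * s2, t1 * t2, ?_, ?_, ?_, ?_, ?_⟩
      · have hc12 := (hdisj hss1 hss2).commute
        calc s1 * s2 * (s1 * s2) = s1 * s1 * (s2 * s2) := by
              rw [mul_assoc s1 s2, ← mul_assoc s2, ← hc12.eq]; group
          _ = 1 := by rw [hs1, hs2, one_mul]
      · have hc12 := (hdisj hts1 hts2).commute
        calc t1 * t2 * (t1 * t2) = t1 * t1 * (t2 * t2) := by
              rw [mul_assoc t1 t2, ← mul_assoc t2, ← hc12.eq]; group
          _ = 1 := by rw [ht1, ht2, one_mul]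
      · have hc12 := (hdisj hts1 hss2).commute
        rw [he1, he2]
        calc s1 * t1 * (s2 * t2) = s1 * (t1 * s2) * t2 := by group
          _ = s1 * (s2 * t1) * t2 := by rw [hc12.eq]
          _ = s1 * s2 * (t1 * t2) := by group
      · rw [hsupp]
        refine (Equiv.Perm.support_mul_le _ _).trans ?_
        exact sup_le_sup hss1 hss2
      · rw [hsupp]
        refine (Equiv.Perm.support_mul_le _ _).trans ?_
        exact sup_le_sup hts1 hts2

/-- An even permutation with two distinct fixed points is a product of two even involutions. -/
theorem exists_two_even_involutions (h : Equiv.Perm (Fin n))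
    (hsgn : Equiv.Perm.sign h = 1) (x y : Fin n) (hxy : x ≠ y) (hx : h x = x) (hy : h y = y) :
    ∃ b c : Equiv.Perm (Fin n), b * b = 1 ∧ c * c = 1 ∧
      Equiv.Perm.sign b = 1 ∧ Equiv.Perm.sign c = 1 ∧ h = b * c := by
  obtain ⟨s, t, hs, ht, he, hss, hts⟩ := exists_two_involutions h
  have hsgn' : Equiv.Perm.sign s * Equiv.Perm.sign t = 1 := by
    rw [← Equiv.Perm.sign_mul, ← he, hsgn]
  have hxh : x ∉ h.support := Equiv.Perm.notMem_support.mpr hx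
  have hyh : y ∉ h.support := Equiv.Perm.notMem_support.mpr hy
  rcases Int.units_eq_one_or (Equiv.Perm.sign s) with h1 | h1
  · have h2 : Equiv.Perm.sign t = 1 := by rwa [h1, one_mul] at hsgn'
    exact ⟨s, t, hs, ht, h1, h2, he⟩
  · have h2 : Equiv.Perm.sign t = -1 := by
      rw [h1] at hsgn'
      have := congrArg (fun u => (-1 : ℤˣ) * u) hsgn'
      simpa using this
    set w := Equiv.swap x y with hw
    have hwsupp : w.support = {x, y} := Equiv.Perm.support_swap hxy
    have hdsw : s.Disjoint w := by
      rw [Equiv.Perm.disjoint_iff_disjoint_support, hwsupp]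
      rw [Finset.disjoint_insert_right, Finset.disjoint_singleton_right]
      exact ⟨fun hc => hxh (hss hc), fun hc => hyh (hss hc)⟩
    have hdtw : t.Disjoint w := by
      rw [Equiv.Perm.disjoint_iff_disjoint_support, hwsupp]
      rw [Finset.disjoint_insert_right, Finset.disjoint_singleton_right]
      exact ⟨fun hc => hxh (hts hc), fun hc => hyh (hts hc)⟩
    have hww : w * w = 1 := Equiv.swap_mul_self x y
    refine ⟨s * w, w * t, ?_, ?_, ?_, ?_, ?_⟩
    · calc s * w * (s * w) = s * s * (w * w) := by
            rw [mul_assoc s w, ← mul_assoc w s, ← hdsw.commute.eq]; group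
        _ = 1 := by rw [hs, hww, one_mul]
    · calc w * t * (w * t) = w * w * (t * t) := by
            rw [mul_assoc w t, ← mul_assoc t w, hdtw.commute.eq]; group
        _ = 1 := by rw [ht, hww, one_mul]
    · rw [Equiv.Perm.sign_mul, h1, Equiv.Perm.sign_swap hxy]; decide
    · rw [Equiv.Perm.sign_mul, h2, Equiv.Perm.sign_swap hxy]; decide
    · calc h = s * t := he
        _ = s * (w * w) * t := by rw [hww, mul_one]
        _ = s * w * (w * t) := by group

end Stmt1Aux

open Stmt1Aux in
/-- For `n ≥ 5`, every element of the alternating group `A_n` is a product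
of three even permutations, each of order dividing 2. -/
theorem stmt_1 (n : ℕ) (hn : 5 ≤ n) (g : alternatingGroup (Fin n)) :
    ∃ a b c : alternatingGroup (Fin n),
      a * a = 1 ∧ b * b = 1 ∧ c * c = 1 ∧ g = a * b * c := by
  classical
  set p : Equiv.Perm (Fin n) := (g : Equiv.Perm (Fin n)) with hpdef
  have hpsgn : Equiv.Perm.sign p = 1 := Equiv.Perm.mem_alternatingGroup.mp g.2
  have main : ∃ a : Equiv.Perm (Fin n), a * a = 1 ∧ Equiv.Perm.sign a = 1 ∧
      ∃ x y, x ≠ y ∧ (a * p) x = x ∧ (a * p) y = y := by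
    by_cases hfix : ∃ x y, x ≠ y ∧ p x = x ∧ p y = y
    · obtain ⟨x, y, h1, h2, h3⟩ := hfix
      exact ⟨1, by simp, by simp, x, y, h1, by simpa, by simpa⟩
    · have hcard : n ≤ p.support.card + 1 := by
        by_contra hcon
        have h2 : 1 < (Finset.univ \ p.support).card := by
          rw [Finset.card_sdiff_of_subset (Finset.subset_univ _), Finset.card_univ, Fintype.card_fin]
          omega
        obtain ⟨x, hxm, y, hym, hxy⟩ := Finset.one_lt_card.mp h2
        exact hfix ⟨x, y, hxy,
          Equiv.Perm.notMem_support.mp (Finset.mem_sdiff.mp hxm).2,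
          Equiv.Perm.notMem_support.mp (Finset.mem_sdiff.mp hym).2⟩
      obtain ⟨x, hx⟩ : p.support.Nonempty := Finset.card_pos.mp (by omega)
      have hTcard : ({x, p x, p⁻¹ x} : Finset (Fin n)).card ≤ 3 := by
        refine le_trans (Finset.card_insert_le _ _) ?_
        have := Finset.card_insert_le (p x) ({p⁻¹ x} : Finset (Fin n))
        simp only [Finset.card_singleton] at this ⊢
        omega
      have hynon : (p.support \ {x, p x, p⁻¹ x}).Nonempty := by
        refine Finset.card_pos.mp (lt_of_lt_of_le ?_ (Finset.le_card_sdiff _ _))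
        omega
      obtain ⟨y, hy⟩ := hynon
      rw [Finset.mem_sdiff] at hy
      obtain ⟨hysupp, hyT⟩ := hy
      simp only [Finset.mem_insert, Finset.mem_singleton, not_or] at hyT
      obtain ⟨hyx, hypx, hypix⟩ := hyT
      have hpx : p x ≠ x := Equiv.Perm.mem_support.mp hx
      have hpy : p y ≠ y := Equiv.Perm.mem_support.mp hysupp
      have hpyx : p y ≠ x := fun hc => hypix (by rw [← hc, Equiv.Perm.inv_def, Equiv.symm_apply_apply])
      have hpxpy : p x ≠ p y := fun hc => (hyx (p.injective hc).symm)
      have hd : (Equiv.swap x (p x)).Disjoint (Equiv.swap y (p y)) := by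
        rw [Equiv.Perm.disjoint_iff_disjoint_support,
          Equiv.Perm.support_swap hpx.symm, Equiv.Perm.support_swap hpy.symm]
        rw [Finset.disjoint_insert_right, Finset.disjoint_singleton_right]
        simp only [Finset.mem_insert, Finset.mem_singleton, not_or]
        exact ⟨⟨fun hc => hyx hc, fun hc => hypx hc⟩, ⟨hpyx, fun hc => hpxpy hc.symm⟩⟩
      refine ⟨Equiv.swap x (p x) * Equiv.swap y (p y), ?_, ?_, x, y, ?_, ?_, ?_⟩
      · calc Equiv.swap x (p x) * Equiv.swap y (p y) *
              (Equiv.swap x (p x) * Equiv.swap y (p y))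
            = Equiv.swap x (p x) * Equiv.swap x (p x) *
              (Equiv.swap y (p y) * Equiv.swap y (p y)) := by
              rw [mul_assoc (Equiv.swap x (p x)) (Equiv.swap y (p y)),
                ← mul_assoc (Equiv.swap y (p y)), ← hd.commute.eq]; group
          _ = 1 := by rw [Equiv.swap_mul_self, Equiv.swap_mul_self, one_mul]
      · rw [Equiv.Perm.sign_mul, Equiv.Perm.sign_swap hpx.symm,
          Equiv.Perm.sign_swap hpy.symm]; decide
      · exact fun hc => hyx hc.symm
      · rw [Equiv.Perm.mul_apply, Equiv.Perm.mul_apply,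
          Equiv.swap_apply_of_ne_of_ne (fun hc => hypx hc.symm) hpxpy,
          Equiv.swap_apply_right]
      · rw [Equiv.Perm.mul_apply, Equiv.Perm.mul_apply, Equiv.swap_apply_right,
          Equiv.swap_apply_of_ne_of_ne hyx hypx]
  obtain ⟨a, haa, hasgn, x, y, hxy, hfx, hfy⟩ := main
  have hsgn2 : Equiv.Perm.sign (a * p) = 1 := by
    rw [Equiv.Perm.sign_mul, hasgn, hpsgn, one_mul]
  obtain ⟨b, c, hbb, hcc, hbs, hcs, heq⟩ :=
    exists_two_even_involutions (a * p) hsgn2 x y hxy hfx hfy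
  have hpeq : p = a * (b * c) := by
    have h1 : a * (a * p) = p := by rw [← mul_assoc, haa, one_mul]
    rw [← h1, heq]
  refine ⟨⟨a, Equiv.Perm.mem_alternatingGroup.mpr hasgn⟩,
    ⟨b, Equiv.Perm.mem_alternatingGroup.mpr hbs⟩,
    ⟨c, Equiv.Perm.mem_alternatingGroup.mpr hcs⟩,
    Subtype.ext haa, Subtype.ext hbb, Subtype.ext hcc, ?_⟩
  refine Subtype.ext ?_
  show p = a * b * c
  rw [hpeq, mul_assoc]
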